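/- For integers l, m, the vector fields Ê_(l) = Σ_{i=1}^n (u^i)^l ∂_i − l (u^j)^{l−1} u^{n+1} ∂_{n+1} on (an open subset of) ℝ^{n+1} (with fixed index j) satisfy the commutation relation [Ê_(l), Ê_(m)] = (m − l) Ê_(m+l−1). -/

import Mathlib

open scoped BigOperators

/-- Partial derivative of a scalar function on `ℝ^m` in the `k`-th coordinate direction. -/
noncomputable def pderiv' {m : ℕ} (f : (Fin m → ℝ) → ℝ) (k : Fin m) (u : Fin m → ℝ) : ℝ :=
  fderiv ℝ f u (Pi.single k 1)

/-- Lie bracket of vector fields on `ℝ^m`: `[X,Y]^i = X^k ∂_k Y^i - Y^k ∂_k X^i`. -/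
noncomputable def lieB {m : ℕ} (X Y : (Fin m → ℝ) → (Fin m → ℝ)) (u : Fin m → ℝ) :
    Fin m → ℝ :=
  fun i => ∑ k, (X u k * pderiv' (fun v => Y v i) k u - Y u k * pderiv' (fun v => X v i) k u)

/-- The vector field `Ê_(l) = Σ_{i=1}^n (u^i)^l ∂_i - l (u^j)^(l-1) u^(n+1) ∂_(n+1)` on ℝ^(n+1). -/
noncomputable def Ehat (n : ℕ) (j : Fin n) (l : ℤ) (u : Fin (n+1) → ℝ) : Fin (n+1) → ℝ :=
  fun i => if h : (i : ℕ) < n then (u i) ^ l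
    else -(l : ℝ) * (u (Fin.castSucc j)) ^ (l - 1) * u (Fin.last n)

lemma hasF_zpow {N : ℕ} (i : Fin N) (l : ℤ) (u : Fin N → ℝ) (h : u i ≠ 0) :
    HasFDerivAt (fun v : Fin N → ℝ => (v i)^l)
      (((l:ℝ) * (u i)^(l-1)) • (ContinuousLinearMap.proj i : (Fin N → ℝ) →L[ℝ] ℝ)) u :=
  (hasDerivAt_zpow l (u i) (Or.inl h)).comp_hasFDerivAt (f := fun v : Fin N → ℝ => v i) u
    (((ContinuousLinearMap.proj i : (Fin N → ℝ) →L[ℝ] ℝ)).hasFDerivAt :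
      HasFDerivAt (fun v : Fin N → ℝ => v i) _ u)

lemma pderiv'_zpow {N : ℕ} (i k : Fin N) (l : ℤ) (u : Fin N → ℝ) (h : u i ≠ 0) :
    pderiv' (fun v => (v i)^l) k u = if i = k then (l:ℝ) * (u i)^(l-1) else 0 := by
  rw [pderiv', (hasF_zpow i l u h).fderiv]
  simp [Pi.single_apply]

lemma pderiv'_mix {N : ℕ} (a b k : Fin N) (C : ℝ) (e : ℤ) (u : Fin N → ℝ) (h : u a ≠ 0) :
    pderiv' (fun v => C * (v a)^e * v b) k u
      = (if a = k then C * (e:ℝ) * (u a)^(e-1) * u b else 0)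
        + (if b = k then C * (u a)^e else 0) := by
  have h1 : HasFDerivAt (fun v : Fin N → ℝ => C * (v a)^e)
      (C • (((e:ℝ) * (u a)^(e-1)) • (ContinuousLinearMap.proj a : (Fin N → ℝ) →L[ℝ] ℝ))) u :=
    (hasF_zpow a e u h).const_mul C
  have h2 := h1.mul ((ContinuousLinearMap.proj b : (Fin N → ℝ) →L[ℝ] ℝ)).hasFDerivAt
  have h2' : HasFDerivAt (fun v : Fin N → ℝ => C * (v a)^e * v b)
      ((C * u a ^ e) • (ContinuousLinearMap.proj b : (Fin N → ℝ) →L[ℝ] ℝ) +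
        u b • C • ((e:ℝ) * u a ^ (e - 1)) • (ContinuousLinearMap.proj a : (Fin N → ℝ) →L[ℝ] ℝ)) u := h2
  rw [pderiv', h2'.fderiv]
  simp only [ContinuousLinearMap.add_apply, ContinuousLinearMap.smul_apply,
    ContinuousLinearMap.proj_apply, Pi.single_apply, smul_eq_mul]
  by_cases ha : a = k <;> by_cases hb : b = k <;> simp [ha, hb] <;> ring


/-- `[Ê_(l), Ê_(m)] = (m - l) Ê_(m+l-1)` on the open set where the first
`n` coordinates are nonzero. -/
theorem stmt0 (n : ℕ) (j : Fin n) (l m : ℤ) (u : Fin (n+1) → ℝ)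
    (hu : ∀ i : Fin n, u (Fin.castSucc i) ≠ 0) :
    lieB (Ehat n j l) (Ehat n j m) u
      = fun i => ((m - l : ℤ) : ℝ) * Ehat n j (m + l - 1) u i := by
  have ha : u (Fin.castSucc j) ≠ 0 := hu j
  funext i
  by_cases h : (i : ℕ) < n
  · have hui : u i ≠ 0 := by
      have := hu ⟨i, h⟩
      simpa [Fin.castSucc, Fin.castAdd, Fin.castLE, Fin.ext_iff] using this
    have hEY : (fun v : Fin (n+1) → ℝ => Ehat n j m v i) = fun v => (v i)^m := by
      funext v; simp only [Ehat, dif_pos h]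
    have hEX : (fun v : Fin (n+1) → ℝ => Ehat n j l v i) = fun v => (v i)^l := by
      funext v; simp only [Ehat, dif_pos h]
    have pY : ∀ k, pderiv' (fun v => (v i)^m) k u = if i = k then (m:ℝ) * (u i)^(m-1) else 0 :=
      fun k => pderiv'_zpow i k m u hui
    have pX : ∀ k, pderiv' (fun v => (v i)^l) k u = if i = k then (l:ℝ) * (u i)^(l-1) else 0 :=
      fun k => pderiv'_zpow i k l u hui
    simp only [lieB, hEY, hEX, pY, pX, mul_ite, mul_zero, Finset.sum_sub_distrib,
      Finset.sum_ite_eq, Finset.mem_univ, if_true]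
    simp only [Ehat, dif_pos h]
    have e1 : (u i)^l * (u i)^(m-1) = (u i)^(m+l-1) := by
      rw [← zpow_add₀ hui]; congr 1; ring
    have e2 : (u i)^m * (u i)^(l-1) = (u i)^(m+l-1) := by
      rw [← zpow_add₀ hui]; congr 1; ring
    push_cast
    linear_combination (m:ℝ) * e1 - (l:ℝ) * e2
  · have hi : i = Fin.last n := by
      have h1 : (i : ℕ) = n := Nat.le_antisymm (Nat.lt_succ_iff.mp i.isLt) (not_lt.mp h)
      exact Fin.ext h1
    subst hi
    have hjn : ((Fin.castSucc j : Fin (n+1)) : ℕ) < n := j.isLt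
    have hjl : (Fin.castSucc j : Fin (n+1)) ≠ Fin.last n := by
      intro hc; rw [hc] at hjn; simp [Fin.last] at hjn
    have hEY : (fun v : Fin (n+1) → ℝ => Ehat n j m v (Fin.last n))
        = fun v => -(m:ℝ) * (v (Fin.castSucc j))^(m-1) * v (Fin.last n) := by
      funext v; simp only [Ehat, dif_neg h]
    have hEX : (fun v : Fin (n+1) → ℝ => Ehat n j l v (Fin.last n))
        = fun v => -(l:ℝ) * (v (Fin.castSucc j))^(l-1) * v (Fin.last n) := by
      funext v; simp only [Ehat, dif_neg h]
    have pY : ∀ k, pderiv' (fun v => -(m:ℝ) * (v (Fin.castSucc j))^(m-1) * v (Fin.last n)) k u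
        = (if Fin.castSucc j = k then -(m:ℝ) * ((m-1:ℤ):ℝ) * (u (Fin.castSucc j))^(m-1-1) * u (Fin.last n) else 0)
          + (if Fin.last n = k then -(m:ℝ) * (u (Fin.castSucc j))^(m-1) else 0) :=
      fun k => pderiv'_mix (Fin.castSucc j) (Fin.last n) k (-(m:ℝ)) (m-1) u ha
    have pX : ∀ k, pderiv' (fun v => -(l:ℝ) * (v (Fin.castSucc j))^(l-1) * v (Fin.last n)) k u
        = (if Fin.castSucc j = k then -(l:ℝ) * ((l-1:ℤ):ℝ) * (u (Fin.castSucc j))^(l-1-1) * u (Fin.last n) else 0)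
          + (if Fin.last n = k then -(l:ℝ) * (u (Fin.castSucc j))^(l-1) else 0) :=
      fun k => pderiv'_mix (Fin.castSucc j) (Fin.last n) k (-(l:ℝ)) (l-1) u ha
    simp only [lieB, hEY, hEX, pY, pX, mul_add, mul_ite, mul_zero, Finset.sum_sub_distrib,
      Finset.sum_add_distrib, Finset.sum_ite_eq, Finset.mem_univ, if_true]
    simp only [Ehat, dif_pos hjn, dif_neg h]
    set x := u (Fin.castSucc j) with hxdef
    set t := u (Fin.last n) with htdef
    have e1 : x^l * x^(m-1-1) = x^(m+l-2) := by rw [← zpow_add₀ ha]; congr 1; ring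
    have e2 : x^(l-1) * x^(m-1) = x^(m+l-2) := by rw [← zpow_add₀ ha]; congr 1; ring
    have e3 : x^m * x^(l-1-1) = x^(m+l-2) := by rw [← zpow_add₀ ha]; congr 1; ring
    have e5 : x^(m+l-1-1) = x^(m+l-2) := by congr 1; ring
    push_cast
    linear_combination (-(m:ℝ)*((m:ℝ)-1)*t) * e1 + ((l:ℝ)*((l:ℝ)-1)*t) * e3
      + ((m:ℝ)-(l:ℝ))*((m:ℝ)+(l:ℝ)-1)*t * e5
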